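/- Let I ∈ ℤ_{≥2}, J ∈ ℤ_{≥1}, b ∈ ((I+J-2)/(I+J-1), 1). Define 𝔇_*(z) = z^{J/I}·((bJ-(J-1))z - ((I+J)b-(I+J-1)))/(z - (Ib-(I-1))). Then for z(θ) = 1/(I+1) + (I/(I+1))e^{iθ} with θ ∈ (-π,π]\{0}, one has |𝔇_*(z(θ))| < 1. In particular |𝔇_*(z(θ))|² ≤ 1 - 2I²J(1-b)((I+J+1)b - (I+J-1))(1-cos θ) / (|1/(I+1) + (I/(I+1))e^{iθ} - (Ib-(I-1))|²(1+I)²). -/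

import Mathlib

open Real

set_option maxHeartbeats 1000000 in
/-- **Steepest descent bound for `𝔇_*` on the circle `𝓜`** (first part of Lemma 6.3 /
(SD𝓜) of the paper).  Let `I ≥ 2`, `J ≥ 1`, `b ∈ ((I+J-2)/(I+J-1), 1)` and
`𝔇_*(z) = z^{J/I}((bJ-(J-1))z - ((I+J)b-(I+J-1)))/(z - (Ib-(I-1)))`, the fractional power
taken with `|z^{J/I}| = |z|^{J/I}`.  Then for `z(θ) = 1/(I+1) + (I/(I+1))e^{iθ}`,
`θ ∈ (-π,π] \ {0}`, one has `|𝔇_*(z(θ))| < 1`, and in fact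
`|𝔇_*(z(θ))|² ≤ 1 - 2I²J(1-b)((I+J+1)b-(I+J-1))(1-cos θ)/(|z(θ)-(Ib-(I-1))|²(1+I)²)`. -/
theorem Dstar_circleM_bound (I J : ℕ) (hI : 2 ≤ I) (hJ : 1 ≤ J) (b : ℝ)
    (hb : b ∈ Set.Ioo (((I : ℝ) + J - 2) / ((I : ℝ) + J - 1)) 1)
    (θ : ℝ) (hθ : θ ∈ Set.Ioc (-π) π) (hθ0 : θ ≠ 0) :
    let z : ℂ := 1 / ((I : ℂ) + 1) + ((I : ℂ) / ((I : ℂ) + 1)) * Complex.exp (θ * Complex.I)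
    let D : ℝ := ‖z‖ ^ ((J : ℝ) / I) *
      ‖((((b * J - ((J : ℝ) - 1) : ℝ) : ℂ) * z
            - ((((I : ℝ) + J) * b - ((I : ℝ) + J - 1) : ℝ) : ℂ)) /
          (z - (((I : ℝ) * b - ((I : ℝ) - 1) : ℝ) : ℂ)))‖
    D < 1 ∧
      D ^ 2 ≤ 1 - 2 * (I : ℝ) ^ 2 * J * (1 - b) * (((I : ℝ) + J + 1) * b - ((I : ℝ) + J - 1))
          * (1 - Real.cos θ) /
          (‖(z - (((I : ℝ) * b - ((I : ℝ) - 1) : ℝ) : ℂ))‖ ^ 2 * (1 + (I : ℝ)) ^ 2) := by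
  intro z D
  obtain ⟨hb0, hb1⟩ := hb
  obtain ⟨hθl, hθr⟩ := hθ
  have hIr : (2:ℝ) ≤ (I:ℝ) := by exact_mod_cast hI
  have hJr : (1:ℝ) ≤ (J:ℝ) := by exact_mod_cast hJ
  have hIJ : (0:ℝ) < (I:ℝ) + (J:ℝ) - 1 := by linarith
  have hbl : ((I:ℝ) + J - 2) < b * ((I:ℝ) + J - 1) := by
    rw [div_lt_iff₀ hIJ] at hb0; linarith
  set c := Real.cos θ with hc
  set sn := Real.sin θ with hsn
  have hpi : (0:ℝ) < π := Real.pi_pos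
  have hc1 : c < 1 := by
    rcases lt_or_eq_of_le (Real.cos_le_one θ) with h | h
    · exact h
    · exfalso
      exact hθ0 ((Real.cos_eq_one_iff_of_lt_of_lt (by linarith) (by linarith)).1 h)
  have hcm1 : -1 ≤ c := Real.neg_one_le_cos θ
  have hsc : sn ^ 2 = 1 - c ^ 2 := by
    have := Real.sin_sq_add_cos_sq θ; nlinarith
  have hIpos : (0:ℝ) < (I:ℝ) + 1 := by linarith
  have hIne : ((I:ℝ) + 1) ≠ 0 := ne_of_gt hIpos
  have hIneC : ((I:ℂ) + 1) ≠ 0 := by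
    intro h
    have h2 : (((I:ℝ) + 1 : ℝ) : ℂ) = 0 := by push_cast; push_cast at h; exact h
    exact hIne (by exact_mod_cast h2)
  -- explicit form of z
  have hz : z = Complex.ofReal ((1 + I * c) / (I + 1)) +
      Complex.ofReal ((I * sn) / (I + 1)) * Complex.I := by
    show (1 / ((I : ℂ) + 1) + ((I : ℂ) / ((I : ℂ) + 1)) * Complex.exp (θ * Complex.I)) = _
    rw [Complex.exp_mul_I]
    rw [show Complex.cos θ = ((c:ℝ):ℂ) by rw [hc]; exact (Complex.ofReal_cos θ).symm]
    rw [show Complex.sin θ = ((sn:ℝ):ℂ) by rw [hsn]; exact (Complex.ofReal_sin θ).symm]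
    push_cast
    field_simp
    ring
  have hzre : z.re = (1 + I * c) / (I + 1) := by
    rw [hz]
    simp only [Complex.add_re, Complex.mul_re, Complex.ofReal_re, Complex.ofReal_im,
      Complex.I_re, Complex.I_im]
    ring
  have hzim : z.im = (I * sn) / (I + 1) := by
    rw [hz]
    simp only [Complex.add_im, Complex.mul_im, Complex.ofReal_re, Complex.ofReal_im,
      Complex.I_re, Complex.I_im]
    ring
  -- abbreviations
  set α : ℝ := b * J - ((J:ℝ) - 1) with hα
  set β : ℝ := ((I:ℝ) + J) * b - ((I:ℝ) + J - 1) with hβ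
  set γ : ℝ := (I:ℝ) * b - ((I:ℝ) - 1) with hγ
  set K : ℝ := 2 * (I:ℝ) ^ 2 * J * (1 - b) * (((I:ℝ) + J + 1) * b - ((I:ℝ) + J - 1)) with hK
  have hKpos : 0 < K := by
    have h1 : 0 < 1 - b := by linarith
    have h2 : 0 < ((I:ℝ) + J + 1) * b - ((I:ℝ) + J - 1) := by nlinarith
    have h3 : (0:ℝ) < (I:ℝ) ^ 2 := by nlinarith
    have h4 : (0:ℝ) < (J:ℝ) := by linarith
    rw [hK]; positivity
  have hγpos : 0 < γ := by
    have h5 : b * ((J:ℝ) - 1) ≤ (J:ℝ) - 1 :=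
      mul_le_of_le_one_left (by linarith) hb1.le
    rw [hγ]; linarith
  -- squared absolute values
  have habs_num : ‖(((α:ℝ):ℂ) * z - ((β:ℝ):ℂ))‖ ^ 2
      = (α * z.re - β) ^ 2 + (α * z.im) ^ 2 := by
    rw [Complex.sq_norm, Complex.normSq_apply]
    simp [Complex.mul_re, Complex.mul_im]
    ring
  have habs_den : ‖(z - ((γ:ℝ):ℂ))‖ ^ 2 = (z.re - γ) ^ 2 + z.im ^ 2 := by
    rw [Complex.sq_norm, Complex.normSq_apply]
    simp
    ring
  have him2 : z.im ^ 2 = (I:ℝ) ^ 2 * (1 - c ^ 2) / ((I:ℝ) + 1) ^ 2 := by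
    rw [hzim, div_pow, mul_pow, hsc]
  -- key identity
  have hkey : (α * z.re - β) ^ 2 + (α * z.im) ^ 2
      = (z.re - γ) ^ 2 + z.im ^ 2 - K * (1 - c) / ((I:ℝ) + 1) ^ 2 := by
    rw [mul_pow, him2, hzre, hα, hβ, hγ, hK]
    field_simp
    ring
  -- denominator positivity: z ≠ γ
  have hden_pos : 0 < ‖(z - ((γ:ℝ):ℂ))‖ ^ 2 := by
    rw [habs_den, him2]
    rcases lt_or_eq_of_le hcm1 with h | h
    · have h1 : 0 < (I:ℝ) ^ 2 * (1 - c ^ 2) / ((I:ℝ) + 1) ^ 2 := by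
        have h2 : 0 < 1 - c ^ 2 := by nlinarith
        positivity
      exact add_pos_of_nonneg_of_pos (sq_nonneg _) h1
    · have hx : z.re = (1 - (I:ℝ)) / ((I:ℝ) + 1) := by rw [hzre, ← h]; ring_nf
      have hxneg : z.re < 0 := by
        rw [hx]
        apply div_neg_of_neg_of_pos _ hIpos
        linarith
      have h4 : (0:ℝ) < γ - z.re := by linarith
      have h5 : 1 - c ^ 2 = 0 := by rw [← h]; norm_num
      rw [h5, mul_zero, zero_div, add_zero]
      have h6 : (z.re - γ) ^ 2 = (γ - z.re) * (γ - z.re) := by ring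
      rw [h6]
      exact mul_pos h4 h4
  set P := ‖(z - ((γ:ℝ):ℂ))‖ ^ 2 with hP
  -- |z| ≤ 1
  have hzabs2 : ‖z‖ ^ 2 = (1 + (I:ℝ)^2 + 2 * I * c) / ((I:ℝ)+1)^2 := by
    have h0 : ‖z‖ ^ 2 = z.re ^ 2 + z.im ^ 2 := by
      rw [Complex.sq_norm, Complex.normSq_apply]; ring
    rw [h0, him2, hzre]
    field_simp
    ring
  have hzabs_le : ‖z‖ ≤ 1 := by
    have h2 : ‖z‖ ^ 2 ≤ 1 := by
      rw [hzabs2, div_le_one (by positivity)]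
      have h5 : 2 * (I:ℝ) * c ≤ 2 * I := by
        have h7 := mul_le_mul_of_nonneg_left hc1.le (by positivity : (0:ℝ) ≤ 2 * I)
        linarith
      have h6 : ((I:ℝ) + 1) ^ 2 = (I:ℝ) ^ 2 + 2 * I + 1 := by ring
      rw [h6]; linarith
    exact (pow_le_one_iff_of_nonneg (norm_nonneg z) two_ne_zero).1 h2
  have ht1 : ‖z‖ ^ ((J:ℝ) / I) ≤ 1 :=
    Real.rpow_le_one (norm_nonneg z) hzabs_le (by positivity)
  have ht0 : 0 ≤ ‖z‖ ^ ((J:ℝ) / I) :=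
    Real.rpow_nonneg (norm_nonneg z) _
  -- ratio squared
  have hratio : ‖((((α:ℝ):ℂ) * z - ((β:ℝ):ℂ)) / (z - ((γ:ℝ):ℂ)))‖ ^ 2
      = (P - K * (1 - c) / ((I:ℝ) + 1) ^ 2) / P := by
    rw [norm_div, div_pow, habs_num, hkey, ← habs_den]
  have hε : 0 < K * (1 - c) / ((I:ℝ) + 1) ^ 2 := by
    have h : 0 < 1 - c := by linarith
    positivity
  have hNn : 0 ≤ P - K * (1 - c) / ((I:ℝ) + 1) ^ 2 := by
    rw [habs_den, ← hkey, ← habs_num]; positivity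
  have hD2 : D ^ 2 ≤ 1 - K * (1 - c) / (P * ((I:ℝ) + 1) ^ 2) := by
    have hDeq : D ^ 2 = (‖z‖ ^ ((J:ℝ) / I)) ^ 2 *
        ((P - K * (1 - c) / ((I:ℝ) + 1) ^ 2) / P) := by
      rw [← hratio]; show (_ * _) ^ 2 = _; ring
    rw [hDeq]
    have h1 : (‖z‖ ^ ((J:ℝ) / I)) ^ 2 ≤ 1 := by
      calc (‖z‖ ^ ((J:ℝ) / I)) ^ 2 ≤ 1 ^ 2 := by
            apply pow_le_pow_left₀ ht0 ht1
        _ = 1 := one_pow 2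
    have hPne : P ≠ 0 := ne_of_gt hden_pos
    have h2 : (P - K * (1 - c) / ((I:ℝ) + 1) ^ 2) / P
        = 1 - K * (1 - c) / (P * ((I:ℝ) + 1) ^ 2) := by
      rw [sub_div, div_self hPne, div_div, mul_comm (((I:ℝ) + 1) ^ 2) P]
    have h3 : 0 ≤ (P - K * (1 - c) / ((I:ℝ) + 1) ^ 2) / P := by positivity
    calc (‖z‖ ^ ((J:ℝ) / I)) ^ 2 * ((P - K * (1 - c) / ((I:ℝ) + 1) ^ 2) / P)
        ≤ 1 * ((P - K * (1 - c) / ((I:ℝ) + 1) ^ 2) / P) :=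
          mul_le_mul_of_nonneg_right h1 h3
      _ = (P - K * (1 - c) / ((I:ℝ) + 1) ^ 2) / P := one_mul _
      _ ≤ _ := le_of_eq h2
  have hD0 : 0 ≤ D := mul_nonneg ht0 (norm_nonneg _)
  have hrhs_lt : 1 - K * (1 - c) / (P * ((I:ℝ) + 1) ^ 2) < 1 := by
    have h : 0 < K * (1 - c) / (P * ((I:ℝ) + 1) ^ 2) := by
      have h0 : 0 < 1 - c := by linarith
      positivity
    linarith
  have hD2lt : D ^ 2 < 1 := lt_of_le_of_lt hD2 hrhs_lt
  constructor
  · exact lt_of_pow_lt_pow_left₀ 2 zero_le_one (by rw [one_pow]; exact hD2lt)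
  · calc D ^ 2 ≤ 1 - K * (1 - c) / (P * ((I:ℝ) + 1) ^ 2) := hD2
      _ = 1 - K * (1 - c) / (P * (1 + (I:ℝ)) ^ 2) := by ring_nf
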